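/- Let f ∈ ℝ[x₁,…,x_n]ⁿ be a polynomial vector field, T > 0, g = (g₁,…,g_m) and h = (h₁,…,h_ℓ) tuples of polynomials in ℝ[x₁,…,x_n] such that X = {y ∈ ℝⁿ : g_i(y) ≥ 0 for all i} is compact and M = {y ∈ ℝⁿ : h_j(y) ≥ 0 for all j} satisfies M ⊆ X, and assume the region of attraction R_T^M is Lebesgue-measurable. Suppose the polynomials v ∈ ℝ[t, x₁,…,x_n] and w ∈ ℝ[x₁,…,x_n] satisfy: w ∈ Q(g); w − v(0,·) − 1 ∈ Q(g); −(∂_t v + ⟨∇_x v, f⟩) ∈ Q(g, (T−t)·t); and v(T,·) ∈ Q(h). Then ∫_X w dx ≥ vol(R_T^M), where vol denotes n-dimensional Lebesgue measure. -/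

import Mathlib

open MvPolynomial Set MeasureTheory

/-- The quadratic module `Q(g)` generated by `g₁, …, g_m`: polynomials of the form
`s₀ + s₁·g₁ + ⋯ + s_m·g_m` where each `sᵢ` is a sum of squares of polynomials. -/
def QuadraticModule {m : ℕ} {σ : Type*} (g : Fin m → MvPolynomial σ ℝ) :
    Set (MvPolynomial σ ℝ) :=
  {p | ∃ s₀ : MvPolynomial σ ℝ, ∃ s : Fin m → MvPolynomial σ ℝ,
    IsSumSq s₀ ∧ (∀ i, IsSumSq (s i)) ∧ p = s₀ + ∑ i, s i * g i}

/-- The region of attraction `R_T^M`: initial conditions `x₀` from which some solution of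
`x' = f(x)` stays in `X` on `[0,T]` and hits the target `M` at time `T`. -/
def RoA {n : ℕ} (f : (Fin n → ℝ) → (Fin n → ℝ)) (X M : Set (Fin n → ℝ)) (T : ℝ) :
    Set (Fin n → ℝ) :=
  {x₀ | ∃ x : ℝ → (Fin n → ℝ), x 0 = x₀ ∧
    (∀ t ∈ Icc (0 : ℝ) T, HasDerivAt x (f (x t)) t) ∧
    (∀ t ∈ Icc (0 : ℝ) T, x t ∈ X) ∧ x T ∈ M}

lemma isSumSq_map {R S : Type*} [CommRing R] [CommRing S] (φ : R →+* S) {a : R}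
    (h : IsSumSq a) : IsSumSq (φ a) := by
  induction h with
  | zero => simpa using IsSumSq.zero
  | sq_add a pS ih => simpa [map_add, map_mul] using IsSumSq.sq_add (φ a) ih

lemma qm_nonneg {m : ℕ} {σ : Type*} {g : Fin m → MvPolynomial σ ℝ} {p : MvPolynomial σ ℝ}
    (hp : p ∈ QuadraticModule g) {y : σ → ℝ} (hy : ∀ i, 0 ≤ eval y (g i)) :
    0 ≤ eval y p := by
  obtain ⟨s₀, s, hs₀, hs, rfl⟩ := hp
  simp only [map_add, map_sum, map_mul]
  exact add_nonneg (isSumSq_map (eval y) hs₀).nonneg (Finset.sum_nonneg fun i _ =>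
    mul_nonneg (isSumSq_map (eval y) (hs i)).nonneg (hy i))

lemma eval_hasDerivAt {N : ℕ} (c : ℝ → Fin N → ℝ) (c' : Fin N → ℝ) (t : ℝ)
    (hc : ∀ i, HasDerivAt (fun s => c s i) (c' i) t) (p : MvPolynomial (Fin N) ℝ) :
    HasDerivAt (fun s => eval (c s) p) (∑ i, eval (c t) (pderiv i p) * c' i) t := by
  induction p using MvPolynomial.induction_on with
  | C a => simpa using hasDerivAt_const t a
  | add p q hp hq => simpa [Finset.sum_add_distrib, add_mul] using hp.fun_add hq
  | mul_X p i hp =>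
    have H := hp.fun_mul (hc i)
    have key : (∑ j, eval (c t) (pderiv j p) * c' j) * c t i + eval (c t) p * c' i
        = ∑ j, eval (c t) (pderiv j (p * X i)) * c' j := by
      simp only [pderiv_mul, pderiv_X, map_add, map_mul, eval_X, add_mul,
        Finset.sum_add_distrib, Finset.sum_mul]
      congr 1
      · exact Finset.sum_congr rfl fun j _ => by ring
      · rw [Finset.sum_eq_single i]
        · simp
        · intro b _ hb; simp [Pi.single_eq_of_ne hb.symm]
        · simp
    simpa [key] using H

lemma eval_aeval_cons {n : ℕ} (a : ℝ) (y : Fin n → ℝ) (v : MvPolynomial (Fin (n+1)) ℝ) :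
    eval y (aeval (Fin.cons (C a) MvPolynomial.X) v) = eval (Fin.cons a y) v := by
  induction v using MvPolynomial.induction_on with
  | C b => simp
  | add p q hp hq => simp only [map_add, hp, hq]
  | mul_X p i hp =>
    simp only [map_mul, aeval_X, hp]
    congr 1
    refine Fin.cases ?_ (fun k => ?_) i <;> simp

/-- for a compact basic semialgebraic admissible set
`X = {y : ∀ i, gᵢ(y) ≥ 0}`, target `M = {y : ∀ j, hⱼ(y) ≥ 0} ⊆ X`, and SoS certificates
`(v, w)` feasible for the degree-`d` outer RoA SoS program, the integral of `w` over `X`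
bounds the Lebesgue volume of the region of attraction: `∫_X w dx ≥ vol(R_T^M)`. -/
theorem sostab_stmt8 {n m ℓ : ℕ}
    (f : Fin n → MvPolynomial (Fin n) ℝ) (T : ℝ) (hT : 0 < T)
    (g : Fin m → MvPolynomial (Fin n) ℝ) (h : Fin ℓ → MvPolynomial (Fin n) ℝ)
    (hXcp : IsCompact {y : Fin n → ℝ | ∀ i, 0 ≤ eval y (g i)})
    (hMX : {y : Fin n → ℝ | ∀ j, 0 ≤ eval y (h j)} ⊆ {y : Fin n → ℝ | ∀ i, 0 ≤ eval y (g i)})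
    (hRm : MeasurableSet (RoA (fun y k => eval y (f k))
      {y | ∀ i, 0 ≤ eval y (g i)} {y | ∀ j, 0 ≤ eval y (h j)} T))
    (v : MvPolynomial (Fin (n + 1)) ℝ) (w : MvPolynomial (Fin n) ℝ)
    (hw : w ∈ QuadraticModule g)
    (hwv : w - aeval (Fin.cons (C (0 : ℝ)) MvPolynomial.X) v - 1 ∈ QuadraticModule g)
    (hlie : -(pderiv (0 : Fin (n + 1)) v
        + ∑ k : Fin n, pderiv k.succ v * rename Fin.succ (f k)) ∈
      QuadraticModule (Fin.cons ((C T - MvPolynomial.X (0 : Fin (n + 1))) * MvPolynomial.X 0)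
        (fun i => rename Fin.succ (g i))))
    (hvT : aeval (Fin.cons (C T) MvPolynomial.X) v ∈ QuadraticModule h) :
    volume (RoA (fun y k => eval y (f k))
        {y | ∀ i, 0 ≤ eval y (g i)} {y | ∀ j, 0 ≤ eval y (h j)} T)
      ≤ ENNReal.ofReal (∫ y in {y : Fin n → ℝ | ∀ i, 0 ≤ eval y (g i)}, eval y w) := by
  set S : Set (Fin n → ℝ) := {y | ∀ i, 0 ≤ eval y (g i)} with hSdef
  set R : Set (Fin n → ℝ) :=
    RoA (fun y k => eval y (f k)) S {y | ∀ j, 0 ≤ eval y (h j)} T with hRdef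
  have hre : ∀ (z : Fin (n+1) → ℝ) (q : MvPolynomial (Fin n) ℝ),
      eval z (rename Fin.succ q) = eval (fun k => z k.succ) q := fun z q => by
    rw [eval_rename]; rfl
  -- pointwise bound on RoA
  have key : ∀ x₀ ∈ R, x₀ ∈ S ∧ 1 ≤ eval x₀ w := by
    rintro x₀ ⟨x, hx0, hdx, hXmem, hMmem⟩
    have hx₀S : x₀ ∈ S := hx0 ▸ hXmem 0 ⟨le_refl 0, hT.le⟩
    refine ⟨hx₀S, ?_⟩
    set L : MvPolynomial (Fin (n+1)) ℝ :=
      pderiv (0 : Fin (n+1)) v + ∑ k : Fin n, pderiv k.succ v * rename Fin.succ (f k) with hL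
    set V : ℝ → ℝ := fun t => eval (Fin.cons t (x t)) v with hV
    have hderiv : ∀ t ∈ Icc (0:ℝ) T, HasDerivAt V (eval (Fin.cons t (x t)) L) t := by
      intro t ht
      set c' : Fin (n+1) → ℝ := Fin.cons 1 (fun k => eval (x t) (f k)) with hc'
      have hc : ∀ i : Fin (n+1), HasDerivAt (fun s => (Fin.cons s (x s) : Fin (n+1) → ℝ) i) (c' i) t := by
        intro i
        induction i using Fin.cases with
        | zero => simpa [hc'] using (hasDerivAt_id' t)
        | succ k => simpa [hc'] using (hasDerivAt_pi.1 (hdx t ht)) k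
      have H := eval_hasDerivAt (fun s => Fin.cons s (x s)) _ t hc v
      convert H using 1
      rw [hL, Fin.sum_univ_succ]
      simp [map_add, map_sum, map_mul, hre, hc', Fin.cons_succ, Fin.cons_zero]
    have hVT0 : 0 ≤ V T := by
      have h1 := qm_nonneg hvT (y := x T) hMmem
      rwa [eval_aeval_cons] at h1
    have hmono : AntitoneOn V (Icc 0 T) := by
      apply antitoneOn_of_deriv_nonpos (convex_Icc 0 T)
      · intro t ht; exact (hderiv t ht).continuousAt.continuousWithinAt
      · intro t ht
        rw [interior_Icc] at ht
        exact (hderiv t (Ioo_subset_Icc_self ht)).differentiableAt.differentiableWithinAt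
      · intro t ht
        rw [interior_Icc] at ht
        rw [(hderiv t (Ioo_subset_Icc_self ht)).deriv]
        have h1 : 0 ≤ eval (Fin.cons t (x t)) (-L) := by
          apply qm_nonneg hlie
          intro i
          refine Fin.cases ?_ (fun j => ?_) i
          · simp only [Fin.cons_zero, map_mul, map_sub, eval_C, eval_X]
            exact mul_nonneg (by linarith [ht.2]) ht.1.le
          · rw [Fin.cons_succ, hre]
            simpa using hXmem t (Ioo_subset_Icc_self ht) j
        simpa using h1
    have hV0 : 0 ≤ V 0 :=
      le_trans hVT0 (hmono ⟨le_refl 0, hT.le⟩ ⟨hT.le, le_refl T⟩ hT.le)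
    have h2 := qm_nonneg hwv (y := x₀) hx₀S
    rw [map_sub, map_sub, eval_aeval_cons, map_one] at h2
    have hV0' : 0 ≤ eval (Fin.cons 0 x₀) v := by rw [← hx0]; exact hV0
    linarith
  -- measure-theoretic conclusion
  have hSmeas : MeasurableSet S := hXcp.isClosed.measurableSet
  have hRS : R ⊆ S := fun x hx => (key x hx).1
  have hRfin : volume R ≠ ⊤ := ((measure_mono hRS).trans_lt hXcp.measure_lt_top).ne
  have hI : IntegrableOn (fun y => eval y w) S volume :=
    (MvPolynomial.continuous_eval (p := w)).continuousOn.integrableOn_compact hXcp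
  have e2 : ∫ y in R, (1:ℝ) ≤ ∫ y in R, eval y w := by
    refine setIntegral_mono_on ?_ (hI.mono_set hRS) hRm (fun x hx => (key x hx).2)
    exact integrableOn_const ((measure_mono hRS).trans_lt hXcp.measure_lt_top).ne
  have e3 : ∫ y in R, eval y w ≤ ∫ y in S, eval y w := by
    refine setIntegral_mono_set hI ?_ (HasSubset.Subset.eventuallyLE hRS)
    exact (ae_restrict_iff' hSmeas).2 (ae_of_all _ fun y hy => qm_nonneg hw hy)
  have e1 : (volume R).toReal = ∫ y in R, (1:ℝ) := by simp [setIntegral_const, Measure.real]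
  calc volume R = ENNReal.ofReal ((volume R).toReal) := (ENNReal.ofReal_toReal hRfin).symm
    _ ≤ ENNReal.ofReal (∫ y in S, eval y w) := ENNReal.ofReal_le_ofReal (by linarith [e1 ▸ e2])
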